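/- arXiv:1903.07095 — 2 statements merged into one kernel-verified Lean document; each statement's English description precedes it below -/
import Mathlib

section
/- Let N ≥ 3 be an integer, m(z) := ⌈-N·arg(z)/(2π)⌉ with arg(z) ∈ [-π, π), and for t ∈ ℤ let S_t := exp(2πit/N)·S_0 with S_0 := {z ∈ ℂ, z ≠ 0 : arg(z) ∈ [-π/(2N), 5π/(2N))} and A_t := exp(2πit/N)·A_0 with A_0 := {z ∈ ℂ, z ≠ 0 : arg(z) ∈ [-π/(2N), π/(2N)]}. Then for every nonzero complex number z and all integers t, k: z·A_t ⊆ S_k if and only if m(z) ≡ t - k (mod N). -/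
/-- The principal argument of a nonzero complex number, normalized to lie in `[-π, π)`. -/
noncomputable def parg (z : ℂ) : ℝ :=
  if Complex.arg z = Real.pi then -Real.pi else Complex.arg z

/-- `m(z) := ⌈-N·arg(z)/(2π)⌉` where `arg(z) ∈ [-π, π)`. -/
noncomputable def mfun (N : ℤ) (z : ℂ) : ℤ :=
  ⌈(-(N : ℝ) * parg z) / (2 * Real.pi)⌉

/-- The rotation `exp(2πit/N)`. -/
noncomputable def rot (N t : ℤ) : ℂ :=
  Complex.exp (2 * Real.pi * Complex.I * (t : ℂ) / (N : ℂ))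

/-- The sector `S₀ = {z ≠ 0 : arg z ∈ [-π/(2N), 5π/(2N))}`. -/
noncomputable def S0 (N : ℤ) : Set ℂ :=
  {z | z ≠ 0 ∧ parg z ∈ Set.Ico (-(Real.pi / (2 * (N : ℝ)))) (5 * Real.pi / (2 * (N : ℝ)))}

/-- The sector `S_t := exp(2πit/N)·S₀`. -/
noncomputable def Ssec (N t : ℤ) : Set ℂ := (fun w => rot N t * w) '' S0 N

/-- The arm `A₀ = {z ≠ 0 : arg z ∈ [-π/(2N), π/(2N)]}`. -/
noncomputable def A0 (N : ℤ) : Set ℂ :=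
  {z | z ≠ 0 ∧ parg z ∈ Set.Icc (-(Real.pi / (2 * (N : ℝ)))) (Real.pi / (2 * (N : ℝ)))}

/-- The arm `A_t := exp(2πit/N)·A₀`. -/
noncomputable def Aarm (N t : ℤ) : Set ℂ := (fun w => rot N t * w) '' A0 N

open Real in
lemma parg_mem (z : ℂ) : parg z ∈ Set.Ico (-π) π := by
  unfold parg
  rcases Complex.arg_mem_Ioc z with ⟨h1, h2⟩
  split_ifs with h
  · exact ⟨le_refl _, by linarith [Real.pi_pos]⟩
  · exact ⟨h1.le, lt_of_le_of_ne h2 h⟩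

lemma parg_angle (z : ℂ) : ((parg z : ℝ) : Real.Angle) = (Complex.arg z : Real.Angle) := by
  unfold parg
  split_ifs with h
  · rw [h, Real.Angle.angle_eq_iff_two_pi_dvd_sub]
    exact ⟨-1, by push_cast; ring⟩
  · rfl

lemma parg_cong {z w : ℂ} (hz : z ≠ 0) (hw : w ≠ 0) :
    ∃ c : ℤ, parg (z * w) = parg z + parg w + 2 * Real.pi * c := by
  have h := Complex.arg_mul_coe_angle hz hw
  have h2 : ((parg (z * w) : ℝ) : Real.Angle) = ((parg z + parg w : ℝ) : Real.Angle) := by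
    rw [Real.Angle.coe_add, parg_angle, parg_angle, parg_angle, h]
  rw [Real.Angle.angle_eq_iff_two_pi_dvd_sub] at h2
  obtain ⟨c, hc⟩ := h2
  exact ⟨c, by linarith⟩

open Real in
lemma parg_expI {φ : ℝ} (h1 : -π < φ) (h2 : φ < π) :
    parg (Complex.exp ((φ : ℂ) * Complex.I)) = φ := by
  have harg : Complex.arg (Complex.exp ((φ : ℂ) * Complex.I)) = φ := by
    rw [Complex.exp_mul_I]
    exact Complex.arg_cos_add_sin_mul_I ⟨h1, h2.le⟩
  unfold parg
  rw [harg, if_neg (ne_of_lt h2)]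

lemma rot_ne (N t : ℤ) : rot N t ≠ 0 := Complex.exp_ne_zero _

lemma rot_mul (N a b : ℤ) : rot N a * rot N b = rot N (a + b) := by
  unfold rot
  rw [← Complex.exp_add]
  congr 1
  push_cast
  ring

lemma rot_zero (N : ℤ) : rot N 0 = 1 := by
  simp [rot]

lemma rot_eq (N j : ℤ) : rot N j = Complex.exp (((2 * Real.pi * j / N : ℝ) : ℂ) * Complex.I) := by
  unfold rot; congr 1; push_cast; ring

lemma parg_rot_cong (N j : ℤ) :
    ∃ c : ℤ, parg (rot N j) = 2 * Real.pi * j / N + 2 * Real.pi * c := by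
  have h : ((parg (rot N j) : ℝ) : Real.Angle) = ((2 * Real.pi * j / N : ℝ) : Real.Angle) := by
    rw [parg_angle, rot_eq, Complex.exp_mul_I, ← Complex.ofReal_cos, ← Complex.ofReal_sin]
    have := Complex.arg_cos_add_sin_mul_I_coe_angle ((2 * Real.pi * j / N : ℝ) : Real.Angle)
    rwa [Real.Angle.cos_coe, Real.Angle.sin_coe] at this
  rw [Real.Angle.angle_eq_iff_two_pi_dvd_sub] at h
  obtain ⟨c, hc⟩ := h
  exact ⟨c, by linarith⟩

lemma mem_Ssec_iff (N k : ℤ) (w : ℂ) : w ∈ Ssec N k ↔ rot N (-k) * w ∈ S0 N := by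
  constructor
  · rintro ⟨s, hs, rfl⟩
    rw [← mul_assoc, rot_mul, show (-k + k) = 0 by ring, rot_zero, one_mul]
    exact hs
  · intro h
    exact ⟨rot N (-k) * w, h, by
      show rot N k * (rot N (-k) * w) = w
      rw [← mul_assoc, rot_mul, show (k + -k) = 0 by ring, rot_zero, one_mul]⟩

open Real in
lemma armA {N : ℤ} (hN : 3 ≤ N) {v : ℂ} (hv : v ≠ 0) :
    (∀ a ∈ A0 N, v * a ∈ S0 N) ↔ (0 ≤ parg v ∧ parg v < 2 * π / (N : ℝ)) := by
  have hNr : (3 : ℝ) ≤ (N : ℝ) := by exact_mod_cast hN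
  have hπ : (0 : ℝ) < π := Real.pi_pos
  have hN0 : (0 : ℝ) < (N : ℝ) := by linarith
  have hD : (0 : ℝ) < π / (2 * (N : ℝ)) := by positivity
  have h6 : 6 * (π / (2 * (N : ℝ))) ≤ π := by
    have h1 : π / (2 * (N : ℝ)) ≤ π / 6 :=
      div_le_div_of_nonneg_left hπ.le (by norm_num) (by linarith)
    linarith
  have h4 : 2 * π / (N : ℝ) = 4 * (π / (2 * (N : ℝ))) := by
    field_simp
    ring
  have h2π : (0 : ℝ) < 2 * π := by positivity
  have h5 : 5 * π / (2 * (N : ℝ)) = 5 * (π / (2 * (N : ℝ))) := by ring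
  obtain ⟨hv1, hv2⟩ := parg_mem v
  constructor
  · intro h
    have key : ∀ φ : ℝ, -(π / (2 * (N : ℝ))) ≤ φ → φ ≤ π / (2 * (N : ℝ)) →
        -(π / (2 * (N : ℝ))) ≤ parg v + φ ∧ parg v + φ < 5 * π / (2 * (N : ℝ)) := by
      intro φ hφ1 hφ2
      set a := Complex.exp ((φ : ℂ) * Complex.I) with ha_def
      have ha0 : a ≠ 0 := Complex.exp_ne_zero _
      have hpa : parg a = φ := parg_expI (by linarith) (by linarith)
      have haA : a ∈ A0 N := ⟨ha0, by rw [hpa]; exact ⟨hφ1, hφ2⟩⟩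
      obtain ⟨-, hS1, hS2⟩ := h a haA
      obtain ⟨c, hc⟩ := parg_cong hv ha0
      rw [hpa] at hc
      have hc1 : (c : ℝ) < 1 := by
        have h2 : 2 * π * (c : ℝ) < 2 * π * 1 := by linarith
        exact (mul_lt_mul_iff_right₀ h2π).mp h2
      have hc2 : (-1 : ℝ) < (c : ℝ) := by
        have h2 : 2 * π * (-1 : ℝ) < 2 * π * (c : ℝ) := by linarith
        exact (mul_lt_mul_iff_right₀ h2π).mp h2
      have hc0 : c = 0 := by
        have e1 : c < 1 := by exact_mod_cast hc1
        have e2 : -1 < c := by exact_mod_cast hc2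
        omega
      rw [hc0] at hc
      push_cast at hc
      constructor <;> linarith
    obtain ⟨k1, k2⟩ := key (π / (2 * (N : ℝ))) (by linarith) le_rfl
    obtain ⟨k3, k4⟩ := key (-(π / (2 * (N : ℝ)))) le_rfl (by linarith)
    constructor
    · linarith
    · rw [h4]; linarith
  · rintro ⟨hθ1, hθ2⟩ a ⟨ha0, haI1, haI2⟩
    rw [h4] at hθ2
    refine ⟨mul_ne_zero hv ha0, ?_, ?_⟩
    all_goals {
      obtain ⟨c, hc⟩ := parg_cong hv ha0
      obtain ⟨hm1, hm2⟩ := parg_mem (v * a)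
      have hc1 : (c : ℝ) < 1 := by
        have h2 : 2 * π * (c : ℝ) < 2 * π * 1 := by linarith
        exact (mul_lt_mul_iff_right₀ h2π).mp h2
      have hc2 : (-1 : ℝ) < (c : ℝ) := by
        have h2 : 2 * π * (-1 : ℝ) < 2 * π * (c : ℝ) := by linarith
        exact (mul_lt_mul_iff_right₀ h2π).mp h2
      have hc0 : c = 0 := by
        have e1 : c < 1 := by exact_mod_cast hc1
        have e2 : -1 < c := by exact_mod_cast hc2
        omega
      rw [hc0] at hc
      push_cast at hc
      linarith }

open Real in
lemma mB {N : ℤ} (hN : 3 ≤ N) {z : ℂ} (hz : z ≠ 0) (j : ℤ) :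
    (0 ≤ parg (rot N j * z) ∧ parg (rot N j * z) < 2 * π / (N : ℝ)) ↔
      mfun N z ≡ j [ZMOD N] := by
  have hNr : (3 : ℝ) ≤ (N : ℝ) := by exact_mod_cast hN
  have hπ : (0 : ℝ) < π := Real.pi_pos
  have hN0 : (0 : ℝ) < (N : ℝ) := by linarith
  have hNne : (N : ℝ) ≠ 0 := ne_of_gt hN0
  have h2π : (0 : ℝ) < 2 * π := by positivity
  obtain ⟨c₁, hc₁⟩ := parg_cong (rot_ne N j) hz
  obtain ⟨c₂, hc₂⟩ := parg_rot_cong N j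
  set θ := parg (rot N j * z) with hθ_def
  obtain ⟨hθ1, hθ2⟩ := parg_mem (rot N j * z)
  rw [← hθ_def] at hθ1 hθ2
  have hψ : parg z = θ - 2 * π * j / (N : ℝ) - 2 * π * (c₁ + c₂) := by
    rw [hc₁, hc₂]; ring
  have hkey : (-(N : ℝ) * parg z) / (2 * π) =
      (-(N : ℝ) * θ) / (2 * π) + ((j + N * (c₁ + c₂) : ℤ) : ℝ) := by
    rw [hψ]; push_cast; field_simp; ring
  have hm : mfun N z = ⌈(-(N : ℝ) * θ) / (2 * π)⌉ + (j + N * (c₁ + c₂)) := by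
    rw [mfun, hkey, Int.ceil_add_intCast]
  set M : ℤ := ⌈(-(N : ℝ) * θ) / (2 * π)⌉ with hM_def
  have hx : ((-(N : ℝ) * θ) / (2 * π)) * (2 * π) = -(N : ℝ) * θ := by field_simp
  have hMle : (M : ℝ) < (-(N : ℝ) * θ) / (2 * π) + 1 := Int.ceil_lt_add_one _
  have hMge : (-(N : ℝ) * θ) / (2 * π) ≤ (M : ℝ) := Int.le_ceil _
  have hxle : (-(N : ℝ) * θ) / (2 * π) ≤ (N : ℝ) / 2 := by
    nlinarith [hx]
  have hxgt : -((N : ℝ) / 2) < (-(N : ℝ) * θ) / (2 * π) := by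
    nlinarith [hx]
  have hMub : M < N := by
    have h1 : (2 * M : ℝ) < (N : ℝ) + 2 := by linarith
    have h2 : (2 * M : ℤ) < N + 2 := by exact_mod_cast h1
    omega
  have hMlb : -N < M := by
    have h1 : -(N : ℝ) < (2 * M : ℝ) := by linarith
    have h2 : -N < (2 * M : ℤ) := by exact_mod_cast h1
    omega
  have hM0 : M = 0 ↔ (0 ≤ θ ∧ θ < 2 * π / (N : ℝ)) := by
    rw [hM_def, Int.ceil_eq_zero_iff, Set.mem_Ioc]
    constructor
    · rintro ⟨hg, hl⟩
      have hl' : -(N : ℝ) * θ ≤ 0 := by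
        rw [← hx]; exact mul_nonpos_of_nonpos_of_nonneg hl h2π.le
      have hg' : -(2 * π) < -(N : ℝ) * θ := by
        rw [← hx]
        have := mul_lt_mul_of_pos_right hg h2π
        linarith
      constructor
      · nlinarith
      · rw [lt_div_iff₀ hN0]; nlinarith
    · rintro ⟨hg, hl⟩
      rw [lt_div_iff₀ hN0] at hl
      constructor
      · rw [lt_div_iff₀ h2π]
        nlinarith
      · rw [div_nonpos_iff]
        right
        exact ⟨by nlinarith [mul_nonneg hN0.le hg], h2π.le⟩
  have hiff : (M + (j + N * (c₁ + c₂)) ≡ j [ZMOD N]) ↔ N ∣ M := by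
    rw [Int.modEq_iff_dvd]
    have he : j - (M + (j + N * (c₁ + c₂))) = N * (-(c₁ + c₂)) + -M := by ring
    rw [he]
    constructor
    · intro hd
      exact (dvd_neg).mp ((dvd_add_right (Dvd.intro _ rfl)).mp hd)
    · intro hd
      exact dvd_add (Dvd.intro _ rfl) (dvd_neg.mpr hd)
  rw [← hM0, hm, hiff]
  constructor
  · intro h0
    rw [h0]
    exact dvd_zero N
  · rintro ⟨d, hMd⟩
    have hd1 : d < 1 := lt_of_mul_lt_mul_left (by rw [mul_one]; omega : N * d < N * 1) (by omega)
    have hd2 : -1 < d := lt_of_mul_lt_mul_left (by rw [mul_neg_one]; omega : N * (-1) < N * d) (by omega)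
    have hd0 : d = 0 := by omega
    rw [hd0, mul_zero] at hMd
    exact hMd

theorem stmt5 (N : ℤ) (hN : 3 ≤ N) (z : ℂ) (hz : z ≠ 0) (t k : ℤ) :
    ((fun w => z * w) '' Aarm N t ⊆ Ssec N k) ↔ mfun N z ≡ t - k [ZMOD N] := by
  have hv : rot N (t - k) * z ≠ 0 := mul_ne_zero (rot_ne N (t - k)) hz
  have he : ∀ a : ℂ, rot N (-k) * (z * (rot N t * a)) = (rot N (t - k) * z) * a := by
    intro a
    rw [show t - k = -k + t by ring, ← rot_mul]
    ring
  have hsub : ((fun w => z * w) '' Aarm N t ⊆ Ssec N k) ↔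
      ∀ a ∈ A0 N, (rot N (t - k) * z) * a ∈ S0 N := by
    constructor
    · intro h a ha
      have h1 : z * (rot N t * a) ∈ Ssec N k := h ⟨rot N t * a, ⟨a, ha, rfl⟩, rfl⟩
      rw [mem_Ssec_iff] at h1
      rwa [he a] at h1
    · rintro h w ⟨b, ⟨a, ha, rfl⟩, rfl⟩
      rw [mem_Ssec_iff, he a]
      exact h a ha
  rw [hsub, armA hN hv, mB hN hz (t - k)]
end

section
/- Let N ≥ 3 be an integer, r ≥ 1, and let ξ be any function from {1, ..., r+1} to the nonzero complex numbers. Define the relation t ≺ t' on {1, ..., r+1} by: t ≺ t' if and only if m(ξ(t')·ξ(t)⁻¹) ≡ m(ξ(t')) - m(ξ(t)) (mod N) and, in addition, at least one of the following holds: m(ξ(t')·ξ(t)⁻¹) + m(ξ(t)·ξ(t')⁻¹) ≡ 1 (mod N), or t' < t. Then ≺ is a strict total order on {1, ..., r+1} (it is irreflexive, transitive, and any two distinct elements are comparable). -/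
/-- `t ≺ t″` iff `m(ξ(t″)·ξ(t)⁻¹) ≡ m(ξ(t″)) - m(ξ(t)) (mod N)` and, in addition,
`m(ξ(t″)·ξ(t)⁻¹) + m(ξ(t)·ξ(t″)⁻¹) ≡ 1 (mod N)` or `t″ < t`. -/
noncomputable def prec (N : ℤ) (ξ : ℕ → ℂ) (t t' : ℕ) : Prop :=
  mfun N (ξ t' * (ξ t)⁻¹) ≡ mfun N (ξ t') - mfun N (ξ t) [ZMOD N] ∧
  (mfun N (ξ t' * (ξ t)⁻¹) + mfun N (ξ t * (ξ t')⁻¹) ≡ 1 [ZMOD N] ∨ t' < t)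

noncomputable def Ffun (N : ℤ) (z : ℂ) : ℝ := (-(N : ℝ) * parg z) / (2 * Real.pi)

lemma mfun_eq_ceil (N : ℤ) (z : ℂ) : mfun N z = ⌈Ffun N z⌉ := rfl

/-- The "fractional part" `⌈F(z)⌉ - F(z) ∈ [0,1)`. -/
noncomputable def alph (N : ℤ) (z : ℂ) : ℝ := (⌈Ffun N z⌉ : ℝ) - Ffun N z

lemma alph_nonneg (N : ℤ) (z : ℂ) : 0 ≤ alph N z := by
  have := Int.le_ceil (Ffun N z); simpa [alph] using this

lemma alph_lt_one (N : ℤ) (z : ℂ) : alph N z < 1 := by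
  have := Int.ceil_lt_add_one (Ffun N z); simp only [alph]; linarith

lemma parg_coe (z : ℂ) : (parg z : Real.Angle) = (Complex.arg z : Real.Angle) := by
  unfold parg
  split
  · rename_i h
    rw [h, Real.Angle.coe_neg, Real.Angle.neg_coe_pi]
  · rfl

lemma exists_int_parg (z w : ℂ) (hz : z ≠ 0) (hw : w ≠ 0) :
    ∃ k : ℤ, parg (z * w⁻¹) = parg z - parg w + 2 * Real.pi * k := by
  have h : (parg (z * w⁻¹) : Real.Angle) = ((parg z - parg w : ℝ) : Real.Angle) := by
    rw [parg_coe, Complex.arg_mul_coe_angle hz (inv_ne_zero hw), Complex.arg_inv_coe_angle,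
      Real.Angle.coe_sub, parg_coe, parg_coe]
    rfl
  rw [Real.Angle.angle_eq_iff_two_pi_dvd_sub] at h
  obtain ⟨k, hk⟩ := h
  exact ⟨k, by linarith⟩

lemma mfun_mul_inv_modeq (N : ℤ) (z w : ℂ) (hz : z ≠ 0) (hw : w ≠ 0) :
    mfun N (z * w⁻¹) ≡ ⌈Ffun N z - Ffun N w⌉ [ZMOD N] := by
  obtain ⟨k, hk⟩ := exists_int_parg z w hz hw
  have hπ : Real.pi ≠ 0 := Real.pi_ne_zero
  have hF : Ffun N (z * w⁻¹) = Ffun N z - Ffun N w + ((-(k * N) : ℤ) : ℝ) := by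
    unfold Ffun
    rw [hk]
    push_cast
    field_simp
    ring
  rw [mfun_eq_ceil, hF, Int.ceil_add_intCast]
  have : N ∣ ⌈Ffun N z - Ffun N w⌉ - (⌈Ffun N z - Ffun N w⌉ + -(k * N)) := ⟨k, by ring⟩
  exact Int.modEq_iff_dvd.mpr this

lemma ceil_sub_of_le {a b : ℝ} (h : (⌈b⌉ : ℝ) - b ≤ (⌈a⌉ : ℝ) - a) :
    ⌈a - b⌉ = ⌈a⌉ - ⌈b⌉ := by
  rw [Int.ceil_eq_iff]
  have h1 := Int.le_ceil b
  have h2 := Int.ceil_lt_add_one a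
  push_cast
  constructor <;> linarith

lemma ceil_sub_of_lt {a b : ℝ} (h : (⌈a⌉ : ℝ) - a < (⌈b⌉ : ℝ) - b) :
    ⌈a - b⌉ = ⌈a⌉ - ⌈b⌉ + 1 := by
  rw [Int.ceil_eq_iff]
  have h1 := Int.le_ceil a
  have h2 := Int.ceil_lt_add_one b
  push_cast
  constructor <;> linarith

lemma prec_iff (N : ℤ) (hN : 3 ≤ N) (ξ : ℕ → ℂ) (t t' : ℕ)
    (ht : ξ t ≠ 0) (ht' : ξ t' ≠ 0) :
    prec N ξ t t' ↔
      (alph N (ξ t) < alph N (ξ t') ∨ (alph N (ξ t) = alph N (ξ t') ∧ t' < t)) := by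
  set a := Ffun N (ξ t') with ha
  set b := Ffun N (ξ t) with hb
  have hmod1 := mfun_mul_inv_modeq N (ξ t') (ξ t) ht' ht
  have hmod2 := mfun_mul_inv_modeq N (ξ t) (ξ t') ht ht'
  have hα : alph N (ξ t') = (⌈a⌉ : ℝ) - a := rfl
  have hβ : alph N (ξ t) = (⌈b⌉ : ℝ) - b := rfl
  constructor
  · rintro ⟨h1, h2⟩
    -- First, from h1 deduce β ≤ α
    have hle : alph N (ξ t) ≤ alph N (ξ t') := by
      by_contra hc
      push_neg at hc
      rw [hα, hβ] at hc
      have hceil : ⌈a - b⌉ = ⌈a⌉ - ⌈b⌉ + 1 := ceil_sub_of_lt hc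
      have : (⌈a⌉ - ⌈b⌉ + 1 : ℤ) ≡ ⌈a⌉ - ⌈b⌉ [ZMOD N] := by
        calc (⌈a⌉ - ⌈b⌉ + 1 : ℤ) ≡ mfun N (ξ t' * (ξ t)⁻¹) [ZMOD N] := by
              rw [← hceil]; exact hmod1.symm
          _ ≡ mfun N (ξ t') - mfun N (ξ t) [ZMOD N] := h1
          _ = ⌈a⌉ - ⌈b⌉ := rfl
      have hdvd := Int.ModEq.dvd this
      have hd1 : N ∣ (1 : ℤ) := by
        have : N ∣ (-1 : ℤ) := by simpa using hdvd
        simpa using this.neg_right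
      have := Int.le_of_dvd one_pos hd1
      omega
    rcases lt_or_eq_of_le hle with hlt | heq
    · exact Or.inl hlt
    · refine Or.inr ⟨heq, ?_⟩
      rcases h2 with h2 | h2
      · exfalso
        rw [hα, hβ] at heq
        -- α = β, so a - b is an integer and ⌈a-b⌉ + ⌈b-a⌉ = 0
        have hc1 : ⌈a - b⌉ = ⌈a⌉ - ⌈b⌉ := ceil_sub_of_le (le_of_eq heq)
        have hc2 : ⌈b - a⌉ = ⌈b⌉ - ⌈a⌉ := ceil_sub_of_le (ge_of_eq heq)
        have : (0 : ℤ) ≡ 1 [ZMOD N] := by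
          calc (0 : ℤ) = (⌈a⌉ - ⌈b⌉) + (⌈b⌉ - ⌈a⌉) := by ring
            _ = ⌈a - b⌉ + ⌈b - a⌉ := by rw [hc1, hc2]
            _ ≡ mfun N (ξ t' * (ξ t)⁻¹) + mfun N (ξ t * (ξ t')⁻¹) [ZMOD N] :=
                Int.ModEq.add hmod1.symm hmod2.symm
            _ ≡ 1 [ZMOD N] := h2
        have hdvd := Int.ModEq.dvd this
        have hd1 : N ∣ (1 : ℤ) := by simpa using hdvd
        have := Int.le_of_dvd one_pos hd1
        omega
      · exact h2
  · rintro h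
    have hle : alph N (ξ t) ≤ alph N (ξ t') := by
      rcases h with h | h
      · exact le_of_lt h
      · exact le_of_eq h.1
    rw [hα, hβ] at hle
    have hc1 : ⌈a - b⌉ = ⌈a⌉ - ⌈b⌉ := ceil_sub_of_le hle
    constructor
    · calc mfun N (ξ t' * (ξ t)⁻¹) ≡ ⌈a - b⌉ [ZMOD N] := hmod1
        _ = mfun N (ξ t') - mfun N (ξ t) := by rw [hc1]; rfl
    · rcases h with h | h
      · left
        rw [hα, hβ] at h
        have hc2 : ⌈b - a⌉ = ⌈b⌉ - ⌈a⌉ + 1 := ceil_sub_of_lt h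
        calc mfun N (ξ t' * (ξ t)⁻¹) + mfun N (ξ t * (ξ t')⁻¹)
            ≡ ⌈a - b⌉ + ⌈b - a⌉ [ZMOD N] := Int.ModEq.add hmod1 hmod2
          _ = 1 := by rw [hc1, hc2]; ring
      · exact Or.inr h.2

theorem stmt7 (N : ℤ) (hN : 3 ≤ N) (r : ℕ) (hr : 1 ≤ r) (ξ : ℕ → ℂ)
    (hξ : ∀ t ∈ Finset.Icc 1 (r + 1), ξ t ≠ 0) :
    (∀ t ∈ Finset.Icc 1 (r + 1), ¬ prec N ξ t t) ∧
    (∀ t ∈ Finset.Icc 1 (r + 1), ∀ t' ∈ Finset.Icc 1 (r + 1), ∀ t'' ∈ Finset.Icc 1 (r + 1),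
      prec N ξ t t' → prec N ξ t' t'' → prec N ξ t t'') ∧
    (∀ t ∈ Finset.Icc 1 (r + 1), ∀ t' ∈ Finset.Icc 1 (r + 1), t ≠ t' →
      prec N ξ t t' ∨ prec N ξ t' t) := by
  refine ⟨?_, ?_, ?_⟩
  · intro t ht hp
    rw [prec_iff N hN ξ t t (hξ t ht) (hξ t ht)] at hp
    rcases hp with h | h
    · exact lt_irrefl _ h
    · exact lt_irrefl _ h.2
  · intro t ht t' ht' t'' ht'' h1 h2
    rw [prec_iff N hN ξ t t' (hξ t ht) (hξ t' ht')] at h1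
    rw [prec_iff N hN ξ t' t'' (hξ t' ht') (hξ t'' ht'')] at h2
    rw [prec_iff N hN ξ t t'' (hξ t ht) (hξ t'' ht'')]
    rcases h1 with h1 | ⟨h1e, h1l⟩ <;> rcases h2 with h2 | ⟨h2e, h2l⟩
    · exact Or.inl (lt_trans h1 h2)
    · exact Or.inl (h2e ▸ h1)
    · exact Or.inl (h1e ▸ h2)
    · exact Or.inr ⟨h1e.trans h2e, lt_trans h2l h1l⟩
  · intro t ht t' ht' hne
    rw [prec_iff N hN ξ t t' (hξ t ht) (hξ t' ht')]
    rw [prec_iff N hN ξ t' t (hξ t' ht') (hξ t ht)]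
    rcases lt_trichotomy (alph N (ξ t)) (alph N (ξ t')) with h | h | h
    · exact Or.inl (Or.inl h)
    · rcases lt_or_gt_of_ne hne with hlt | hlt
      · exact Or.inr (Or.inr ⟨h.symm, hlt⟩)
      · exact Or.inl (Or.inr ⟨h, hlt⟩)
    · exact Or.inr (Or.inl h)
end
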